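/- For all h, k ∈ ℝ^r, the mixed second directional derivative ∂²/∂s∂u [L(μ + s·h + u·k, Ψ)] evaluated at s = u = 0 equals (2/(ν + r))·∑_{n=1}^N w_n² (hᵀΨ⁻¹x̃_n)(x̃_nᵀΨ⁻¹k) − (∑_{n=1}^N w_n)·hᵀΨ⁻¹k; equivalently, the Hessian matrix of L with respect to μ equals (2/(ν + r))·Ψ⁻¹(∑_{n=1}^N w_n² x̃_n x̃_nᵀ)Ψ⁻¹ − (∑_{n=1}^N w_n)·Ψ⁻¹. -/

import Mathlib

open Matrix BigOperators

/-- derivative of a quadratic polynomial -/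
lemma quad_hasDerivAt (a b c t : ℝ) :
    HasDerivAt (fun u : ℝ => a + u * b + u ^ 2 * c) (b + 2 * t * c) t := by
  have h1 : HasDerivAt (fun u : ℝ => u) 1 t := hasDerivAt_id t
  have h2 : HasDerivAt (fun u : ℝ => u ^ 2) (2 * t) t := by
    simpa using hasDerivAt_pow 2 t
  have := ((hasDerivAt_const t a).fun_add (h1.mul_const b)).fun_add (h2.mul_const c)
  simpa [mul_comm, mul_assoc, one_mul] using this

lemma quad_expand {r : ℕ} (A : Matrix (Fin r) (Fin r) ℝ) (v w : Fin r → ℝ) (t : ℝ) :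
    (v - t • w) ⬝ᵥ (A *ᵥ (v - t • w))
      = v ⬝ᵥ (A *ᵥ v) + t * (-(w ⬝ᵥ (A *ᵥ v) + v ⬝ᵥ (A *ᵥ w)))
        + t ^ 2 * (w ⬝ᵥ (A *ᵥ w)) := by
  simp only [Matrix.mulVec_sub, Matrix.mulVec_smul, dotProduct_sub, sub_dotProduct,
    dotProduct_smul, smul_dotProduct, smul_eq_mul]
  ring

/-- The essential part of the log-likelihood of `N` observations from the multivariate
`t_ν` distribution with location `μ` and scatter matrix `Ψ`. -/
noncomputable def tLogLik (r N : ℕ) (ν : ℝ) (x : Fin N → Fin r → ℝ)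
    (μ : Fin r → ℝ) (Ψ : Matrix (Fin r) (Fin r) ℝ) : ℝ :=
  -((N : ℝ) / 2) * Real.log Ψ.det
    - ((ν + r) / 2) * ∑ n, Real.log (1 + ((x n - μ) ⬝ᵥ (Ψ⁻¹ *ᵥ (x n - μ))) / ν)

/-- the mixed second directional derivative of `L(·, Ψ)` at `μ` in the
directions `h, k` equals
`(2/(ν+r))·∑ₙ wₙ² (hᵀΨ⁻¹x̃ₙ)(x̃ₙᵀΨ⁻¹k) − (∑ₙ wₙ)·hᵀΨ⁻¹k`
(the μ–μ block of the Fisher information matrix). -/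
theorem mixed_second_deriv_location
    (r N : ℕ) (hr : 1 ≤ r) (hN : 1 ≤ N) (ν : ℝ) (hν : 0 < ν)
    (x : Fin N → Fin r → ℝ) (μ : Fin r → ℝ)
    (Ψ : Matrix (Fin r) (Fin r) ℝ) (hΨ : Ψ.PosDef)
    (δ : Fin N → ℝ)
    (hδ : ∀ n, δ n = (x n - μ) ⬝ᵥ (Ψ⁻¹ *ᵥ (x n - μ)))
    (w : Fin N → ℝ)
    (hw : ∀ n, w n = (ν + r) / (ν + δ n))
    (h k : Fin r → ℝ) :
    deriv (fun s : ℝ =>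
        deriv (fun u : ℝ => tLogLik r N ν x (μ + s • h + u • k) Ψ) 0) 0
      = (2 / (ν + r)) * ∑ n, (w n) ^ 2 *
            (h ⬝ᵥ (Ψ⁻¹ *ᵥ (x n - μ))) * ((x n - μ) ⬝ᵥ (Ψ⁻¹ *ᵥ k))
        - (∑ n, w n) * (h ⬝ᵥ (Ψ⁻¹ *ᵥ k)) := by
  have hν' : ν ≠ 0 := ne_of_gt hν
  set A := Ψ⁻¹ with hAdef
  have hA : A.PosDef := hΨ.inv
  have hAT : Aᵀ = A := by
    have := hA.isHermitian
    simpa [Matrix.IsHermitian, Matrix.conjTranspose_eq_transpose_of_trivial] using this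
  have hAsm : ∀ u v : Fin r → ℝ, u ⬝ᵥ (A *ᵥ v) = v ⬝ᵥ (A *ᵥ u) := by
    intro u v
    rw [Matrix.dotProduct_mulVec, ← Matrix.mulVec_transpose, hAT, dotProduct_comm]
  have hAnn : ∀ v : Fin r → ℝ, 0 ≤ v ⬝ᵥ (A *ᵥ v) := by
    intro v
    simpa using hA.posSemidef.re_dotProduct_nonneg v
  -- notation
  set xt : Fin N → Fin r → ℝ := fun n => x n - μ with hxt
  set v : Fin N → ℝ → (Fin r → ℝ) := fun n s => xt n - s • h with hv
  have hden : ∀ (n : Fin N) (s : ℝ), (0:ℝ) < 1 + (v n s ⬝ᵥ (A *ᵥ v n s)) / ν := by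
    intro n s
    have := hAnn (v n s)
    positivity
  -- the value of the inner derivative, as a function of s
  set F : ℝ → ℝ := fun s => -((ν + r) / 2) * ∑ n,
      ((-(k ⬝ᵥ (A *ᵥ v n s) + v n s ⬝ᵥ (A *ᵥ k))) / ν)
        / (1 + (v n s ⬝ᵥ (A *ᵥ v n s)) / ν) with hF
  have claim1 : ∀ s : ℝ,
      deriv (fun u : ℝ => tLogLik r N ν x (μ + s • h + u • k) Ψ) 0 = F s := by
    intro s
    have hre : ∀ (u : ℝ) (n : Fin N), x n - (μ + s • h + u • k) = v n s - u • k := by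
      intro u n
      funext i
      simp [hv, hxt]
      ring
    have hfun2 : (fun u : ℝ => tLogLik r N ν x (μ + s • h + u • k) Ψ)
        = fun u : ℝ => -((N : ℝ) / 2) * Real.log Ψ.det - ((ν + r) / 2) *
            ∑ n, Real.log (1 + ((v n s - u • k) ⬝ᵥ (A *ᵥ (v n s - u • k))) / ν) := by
      funext u
      simp only [tLogLik, ← hAdef, hre]
    rw [hfun2]
    have hsum : HasDerivAt (fun u : ℝ =>
        ∑ n, Real.log (1 + ((v n s - u • k) ⬝ᵥ (A *ᵥ (v n s - u • k))) / ν))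
        (∑ n, ((-(k ⬝ᵥ (A *ᵥ v n s) + v n s ⬝ᵥ (A *ᵥ k))) / ν)
          / (1 + (v n s ⬝ᵥ (A *ᵥ v n s)) / ν)) 0 := by
      apply HasDerivAt.fun_sum
      intro n _
      set a0 : ℝ := 1 + (v n s ⬝ᵥ (A *ᵥ v n s)) / ν with ha0
      set b0 : ℝ := (-(k ⬝ᵥ (A *ᵥ v n s) + v n s ⬝ᵥ (A *ᵥ k))) / ν with hb0
      set c0 : ℝ := (k ⬝ᵥ (A *ᵥ k)) / ν with hc0
      have hfun : (fun u : ℝ => 1 + ((v n s - u • k) ⬝ᵥ (A *ᵥ (v n s - u • k))) / ν)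
          = fun u : ℝ => a0 + u * b0 + u ^ 2 * c0 := by
        funext u
        rw [quad_expand, ha0, hb0, hc0]
        ring
      have hq := quad_hasDerivAt a0 b0 c0 0
      rw [← hfun] at hq
      have hne : (fun u : ℝ => 1 + ((v n s - u • k) ⬝ᵥ (A *ᵥ (v n s - u • k))) / ν) 0 ≠ 0 := by
        simpa using (hden n s).ne'
      have hlog := hq.log hne
      refine hlog.congr_deriv ?_
      have hz : v n s - (0:ℝ) • k = v n s := by simp
      rw [hz, ← ha0]
      ring
    have htot := (hasDerivAt_const (0:ℝ) (-((N : ℝ) / 2) * Real.log Ψ.det)).fun_sub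
      (hsum.const_mul ((ν + r) / 2))
    have := htot.deriv
    rw [this, hF]
    ring
  have hfeq : (fun s : ℝ =>
      deriv (fun u : ℝ => tLogLik r N ν x (μ + s • h + u • k) Ψ) 0) = F :=
    funext claim1
  rw [hfeq]
  -- now differentiate F at 0
  have hδnn : ∀ n, 0 ≤ δ n := by
    intro n
    rw [hδ n]
    exact hAnn _
  have hνδ : ∀ n, ν + δ n ≠ 0 := fun n => by have := hδnn n; positivity
  -- per-n derivative of F
  have hFder : HasDerivAt F
      (-((ν + r) / 2) * ∑ n,
        (((k ⬝ᵥ (A *ᵥ h) + h ⬝ᵥ (A *ᵥ k)) / ν) * (1 + (xt n ⬝ᵥ (A *ᵥ xt n)) / ν)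
          - ((-(k ⬝ᵥ (A *ᵥ xt n) + xt n ⬝ᵥ (A *ᵥ k))) / ν)
            * ((-(h ⬝ᵥ (A *ᵥ xt n) + xt n ⬝ᵥ (A *ᵥ h))) / ν))
          / (1 + (xt n ⬝ᵥ (A *ᵥ xt n)) / ν) ^ 2) 0 := by
    apply HasDerivAt.const_mul
    apply HasDerivAt.fun_sum
    intro n _
    -- numerator and denominator as polynomials in s
    have hnum : (fun s : ℝ => (-(k ⬝ᵥ (A *ᵥ v n s) + v n s ⬝ᵥ (A *ᵥ k))) / ν)
        = fun s : ℝ => ((-(k ⬝ᵥ (A *ᵥ xt n) + xt n ⬝ᵥ (A *ᵥ k))) / ν)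
            + s * ((k ⬝ᵥ (A *ᵥ h) + h ⬝ᵥ (A *ᵥ k)) / ν) + s ^ 2 * 0 := by
      funext s
      simp only [hv, Matrix.mulVec_sub, Matrix.mulVec_smul, dotProduct_sub,
        sub_dotProduct, dotProduct_smul, smul_dotProduct, smul_eq_mul]
      ring
    have hdenf : (fun s : ℝ => 1 + (v n s ⬝ᵥ (A *ᵥ v n s)) / ν)
        = fun s : ℝ => (1 + (xt n ⬝ᵥ (A *ᵥ xt n)) / ν)
            + s * ((-(h ⬝ᵥ (A *ᵥ xt n) + xt n ⬝ᵥ (A *ᵥ h))) / ν)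
            + s ^ 2 * ((h ⬝ᵥ (A *ᵥ h)) / ν) := by
      funext s
      simp only [hv]
      rw [quad_expand]
      ring
    have h1 := quad_hasDerivAt ((-(k ⬝ᵥ (A *ᵥ xt n) + xt n ⬝ᵥ (A *ᵥ k))) / ν)
      ((k ⬝ᵥ (A *ᵥ h) + h ⬝ᵥ (A *ᵥ k)) / ν) 0 0
    rw [← hnum] at h1
    have h2 := quad_hasDerivAt (1 + (xt n ⬝ᵥ (A *ᵥ xt n)) / ν)
      ((-(h ⬝ᵥ (A *ᵥ xt n) + xt n ⬝ᵥ (A *ᵥ h))) / ν) ((h ⬝ᵥ (A *ᵥ h)) / ν) 0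
    rw [← hdenf] at h2
    have hne0 : (fun s : ℝ => 1 + (v n s ⬝ᵥ (A *ᵥ v n s)) / ν) 0 ≠ 0 := (hden n 0).ne'
    have hd := h1.div h2 hne0
    have hv0 : v n 0 = xt n := by
      funext i
      simp [hv]
    rw [hv0] at hd
    refine hd.congr_deriv ?_
    ring
  rw [hFder.deriv]
  -- final algebraic identity
  rw [Finset.mul_sum, Finset.mul_sum, Finset.sum_mul, ← Finset.sum_sub_distrib]
  apply Finset.sum_congr rfl
  intro n _
  have e1 : k ⬝ᵥ (A *ᵥ xt n) = xt n ⬝ᵥ (A *ᵥ k) := hAsm k (xt n)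
  have e2 : xt n ⬝ᵥ (A *ᵥ h) = h ⬝ᵥ (A *ᵥ xt n) := hAsm (xt n) h
  have e3 : k ⬝ᵥ (A *ᵥ h) = h ⬝ᵥ (A *ᵥ k) := hAsm k h
  have e4 : xt n ⬝ᵥ (A *ᵥ xt n) = δ n := (hδ n).symm
  have gA : h ⬝ᵥ (A *ᵥ (x n - μ)) = h ⬝ᵥ (A *ᵥ xt n) := rfl
  have gC : (x n - μ) ⬝ᵥ (A *ᵥ k) = xt n ⬝ᵥ (A *ᵥ k) := rfl
  have hνr : (ν + (r:ℝ)) ≠ 0 := by positivity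
  rw [e1, e2, e3, e4, hw n, gA, gC]
  have hne := hνδ n
  generalize h ⬝ᵥ (A *ᵥ xt n) = a
  generalize xt n ⬝ᵥ (A *ᵥ k) = c
  generalize h ⬝ᵥ (A *ᵥ k) = e
  generalize hdd : δ n = d at hne ⊢
  field_simp
  ring
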